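/- arXiv:0901.1783 — 8 statements merged into one kernel-verified Lean document; each statement's English description precedes it below -/
import Mathlib

section
/- Let m, n be positive integers and let A, B ∈ SL(2,ℂ) satisfy A^m = B^n. If A^m ≠ Id and A^m ≠ -Id, then the pair (A, B) is reducible, i.e., there exists a nonzero vector v ∈ ℂ² that is an eigenvector of both A and B. -/
open Matrix

/-- A pair `(A, B)` of `2 × 2` complex matrices is reducible if there is a nonzero
common eigenvector. -/
def IsReduciblePair (A B : Matrix (Fin 2) (Fin 2) ℂ) : Prop :=
  ∃ v : Fin 2 → ℂ, v ≠ 0 ∧ (∃ a : ℂ, A.mulVec v = a • v) ∧ (∃ b : ℂ, B.mulVec v = b • v)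

theorem stmt0 (m n : ℕ) (hm : 0 < m) (hn : 0 < n)
    (A B : Matrix (Fin 2) (Fin 2) ℂ) (hA : A.det = 1) (hB : B.det = 1)
    (h : A ^ m = B ^ n) (h1 : A ^ m ≠ 1) (h2 : A ^ m ≠ -1) :
    IsReduciblePair A B := by
  set C := A ^ m with hC
  have hAC : A * C = C * A := ((Commute.refl A).pow_right m)
  have hBC : B * C = C * B := by rw [h]; exact ((Commute.refl B).pow_right n)
  have hdet : C.det = 1 := by rw [hC, det_pow, hA, one_pow]
  -- C is not scalar
  have hns : ∀ c : ℂ, C ≠ c • (1 : Matrix (Fin 2) (Fin 2) ℂ) := by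
    intro c hc
    have : (c • (1 : Matrix (Fin 2) (Fin 2) ℂ)).det = 1 := hc ▸ hdet
    rw [det_smul, det_one, mul_one, Fintype.card_fin] at this
    rw [pow_two] at this
    rcases mul_self_eq_one_iff.mp this with h' | h'
    · exact h1 (by rw [hC] at hc ⊢; rw [hc, h', one_smul])
    · exact h2 (by rw [hC] at hc ⊢; rw [hc, h', neg_smul, one_smul])
  set T := Matrix.toLin' C with hT
  obtain ⟨μ, hμ⟩ := Module.End.exists_eigenvalue T
  obtain ⟨v, hv⟩ := hμ.exists_hasEigenvector
  set E := Module.End.eigenspace T μ with hE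
  have hvE : v ∈ E := hv.1
  have hvne : v ≠ 0 := hv.2
  have hEne : E ≠ ⊤ := by
    intro htop
    apply hns μ
    apply Matrix.toLin'.injective
    apply LinearMap.ext; intro w
    have hw : w ∈ E := htop ▸ Submodule.mem_top
    have := Module.End.mem_eigenspace_iff.mp hw
    simp only [hT, Matrix.toLin'_apply] at this ⊢
    rw [this, Matrix.smul_mulVec, Matrix.one_mulVec]
  have hfin : Module.finrank ℂ E ≤ 1 := by
    by_contra hcon
    push_neg at hcon
    have hle : Module.finrank ℂ E ≤ 2 := by
      have := Submodule.finrank_le E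
      simpa using this
    have : Module.finrank ℂ E = 2 := le_antisymm hle hcon
    exact hEne (Submodule.eq_top_of_finrank_eq (by simpa using this))
  have hspan : Submodule.span ℂ {v} = E := by
    apply Submodule.eq_of_le_of_finrank_le
    · exact Submodule.span_le.mpr (by simpa using hvE)
    · rw [finrank_span_singleton hvne]; exact hfin
  -- E is invariant under a matrix M commuting with C
  have key : ∀ M : Matrix (Fin 2) (Fin 2) ℂ, M * C = C * M →
      ∃ a : ℂ, M.mulVec v = a • v := by
    intro M hM
    have hmem : M.mulVec v ∈ E := by
      rw [Module.End.mem_eigenspace_iff]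
      have hv' : C.mulVec v = μ • v := by
        have := Module.End.mem_eigenspace_iff.mp hvE
        simpa [hT, Matrix.toLin'_apply] using this
      simp only [hT, Matrix.toLin'_apply]
      rw [Matrix.mulVec_mulVec, ← hM, ← Matrix.mulVec_mulVec, hv',
        Matrix.mulVec_smul]
    rw [← hspan] at hmem
    obtain ⟨a, ha⟩ := Submodule.mem_span_singleton.mp hmem
    exact ⟨a, ha.symm⟩
  exact ⟨v, hvne, key A hAC, key B hBC⟩
end

section
/- Let m, n be positive integers and let A, B ∈ SL(2,ℂ) satisfy A^m = B^n. If A is not diagonalizable (i.e., A is not similar over ℂ to a diagonal matrix) or B is not diagonalizable, then the pair (A, B) is reducible, i.e., there exists a nonzero vector v ∈ ℂ² that is an eigenvector of both A and B. -/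
open Matrix

/-- A `2 × 2` complex matrix is diagonalizable if it is similar over `ℂ` to a
diagonal matrix. -/
def IsDiagonalizable (M : Matrix (Fin 2) (Fin 2) ℂ) : Prop :=
  ∃ P : Matrix (Fin 2) (Fin 2) ℂ, IsUnit P.det ∧
    ∃ d : Fin 2 → ℂ, M = P * Matrix.diagonal d * P⁻¹

lemma auxMulVec2 (M : Matrix (Fin 2) (Fin 2) ℂ) (x y : ℂ) :
    M.mulVec ![x, y] = ![M 0 0 * x + M 0 1 * y, M 1 0 * x + M 1 1 * y] := by
  funext i
  fin_cases i <;> simp [Matrix.mulVec, dotProduct, Fin.sum_univ_two]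

lemma auxSmul2 (c x y : ℂ) : c • (![x, y] : Fin 2 → ℂ) = ![c * x, c * y] := by
  funext i
  fin_cases i <;> simp

lemma auxVec2Eq {x y x' y' : ℂ} (h1 : x = x') (h2 : y = y') :
    (![x, y] : Fin 2 → ℂ) = ![x', y'] := by
  rw [h1, h2]

/-- Two vectors in ℂ² with vanishing "determinant" are proportional. -/
lemma dep_of_det_zero (v w : Fin 2 → ℂ) (hv : v ≠ 0)
    (hd : v 0 * w 1 = v 1 * w 0) : ∃ μ : ℂ, w = μ • v := by
  by_cases h0 : v 0 ≠ 0
  · refine ⟨w 0 / v 0, funext fun i => ?_⟩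
    fin_cases i <;>
      simp only [Pi.smul_apply, smul_eq_mul, Fin.zero_eta, Fin.mk_one, Fin.isValue]
    · field_simp
    · rw [div_mul_eq_mul_div, eq_div_iff h0]
      linear_combination hd
  · push_neg at h0
    have h1 : v 1 ≠ 0 := by
      intro h1
      apply hv
      funext i; fin_cases i <;> simp [h0, h1]
    have hw0 : w 0 = 0 := by
      have hz : v 1 * w 0 = 0 := by rw [← hd, h0]; ring
      exact (mul_eq_zero.mp hz).resolve_left h1
    refine ⟨w 1 / v 1, funext fun i => ?_⟩
    fin_cases i <;>
      simp only [Pi.smul_apply, smul_eq_mul, Fin.zero_eta, Fin.mk_one, Fin.isValue]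
    · rw [h0, mul_zero, hw0]
    · field_simp

/-- A nonzero 2×2 matrix killing two vectors forces them proportional. -/
lemma ker_dep (N : Matrix (Fin 2) (Fin 2) ℂ) (hN : N ≠ 0) (v w : Fin 2 → ℂ)
    (hv : v ≠ 0) (hNv : N.mulVec v = 0) (hNw : N.mulVec w = 0) :
    ∃ μ : ℂ, w = μ • v := by
  apply dep_of_det_zero v w hv
  by_contra hd
  set Q : Matrix (Fin 2) (Fin 2) ℂ := Matrix.of ![![v 0, w 0], ![v 1, w 1]] with hQ
  have hdet : IsUnit Q.det := by
    rw [isUnit_iff_ne_zero]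
    intro h
    rw [Matrix.det_fin_two] at h
    simp only [hQ, Matrix.of_apply, Matrix.cons_val', Matrix.cons_val_zero, Matrix.cons_val_one,
      Matrix.head_cons, Matrix.empty_val', Matrix.cons_val_fin_one, Matrix.head_fin_const] at h
    apply hd
    linear_combination h
  have hNQ : N * Q = 0 := by
    ext i j
    have h1 := congrFun hNv i
    have h2 := congrFun hNw i
    simp only [Matrix.mulVec, dotProduct, Fin.sum_univ_two, Pi.zero_apply] at h1 h2
    fin_cases j <;>
      simpa [Matrix.mul_apply, Fin.sum_univ_two, hQ] using (by assumption : _)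
  apply hN
  calc N = N * Q * Q⁻¹ := (Matrix.mul_nonsing_inv_cancel_right (A := Q) N hdet).symm
       _ = 0 := by rw [hNQ, Matrix.zero_mul]

/-- A root of the characteristic polynomial has a nonzero eigenvector. -/
lemma exists_eigvec (M : Matrix (Fin 2) (Fin 2) ℂ) (lam : ℂ)
    (hc : lam * lam - (M 0 0 + M 1 1) * lam + M.det = 0) :
    ∃ v : Fin 2 → ℂ, v ≠ 0 ∧ M.mulVec v = lam • v := by
  rw [Matrix.det_fin_two] at hc
  by_cases h01 : M 0 1 ≠ 0
  · refine ⟨![M 0 1, lam - M 0 0], fun h => h01 (congrFun h 0), ?_⟩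
    rw [auxMulVec2, auxSmul2]
    exact auxVec2Eq (by ring) (by linear_combination -hc)
  · push_neg at h01
    by_cases h : lam = M 1 1
    · refine ⟨![0, 1], ?_, ?_⟩
      · intro hz
        have := congrFun hz 1
        simp at this
      · rw [auxMulVec2, auxSmul2]
        exact auxVec2Eq (by rw [h01]; ring) (by rw [h]; ring)
    · have hlam : lam = M 0 0 := by
        have hfac : (lam - M 0 0) * (lam - M 1 1) = 0 := by
          linear_combination hc + M 1 0 * h01
        rcases mul_eq_zero.mp hfac with h' | h'
        · linear_combination h'
        · exact absurd (by linear_combination h') h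
      refine ⟨![M 0 0 - M 1 1, M 1 0], ?_, ?_⟩
      · intro hz
        have h0 := congrFun hz 0
        simp only [Matrix.cons_val_zero, Pi.zero_apply] at h0
        exact h (by rw [hlam]; linear_combination h0)
      · rw [auxMulVec2, auxSmul2]
        exact auxVec2Eq (by rw [hlam, h01]; ring) (by rw [hlam]; ring)

/-- Distinct eigenvalues with eigenvectors give diagonalizability. -/
lemma diag_of_two_eig (M : Matrix (Fin 2) (Fin 2) ℂ) (a b : ℂ) (hab : a ≠ b)
    (v w : Fin 2 → ℂ) (hv : v ≠ 0) (hw : w ≠ 0)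
    (hMv : M.mulVec v = a • v) (hMw : M.mulVec w = b • w) :
    IsDiagonalizable M := by
  set P : Matrix (Fin 2) (Fin 2) ℂ := Matrix.of ![![v 0, w 0], ![v 1, w 1]] with hP
  have hdet : P.det ≠ 0 := by
    intro hd
    rw [Matrix.det_fin_two] at hd
    simp only [hP, Matrix.of_apply, Matrix.cons_val', Matrix.cons_val_zero, Matrix.cons_val_one,
      Matrix.head_cons, Matrix.empty_val', Matrix.cons_val_fin_one, Matrix.head_fin_const] at hd
    obtain ⟨μ, hμ⟩ := dep_of_det_zero v w hv (by linear_combination hd)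
    have hμ0 : μ ≠ 0 := fun h => hw (by rw [hμ, h, zero_smul])
    have key : b • w = (a * μ) • v := by
      rw [← hMw, hμ, Matrix.mulVec_smul, hMv, smul_smul, mul_comm]
    rw [hμ, smul_smul] at key
    have key2 : (b * μ - a * μ) • v = 0 := by rw [sub_smul, key, sub_self]
    rcases smul_eq_zero.mp key2 with h | h
    · exact hab (mul_right_cancel₀ hμ0 (by linear_combination h)).symm
    · exact hv h
  have hunit : IsUnit P.det := isUnit_iff_ne_zero.mpr hdet
  refine ⟨P, hunit, ![a, b], ?_⟩
  have key : M * P = P * Matrix.diagonal ![a, b] := by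
    have e1 := congrFun hMv 0
    have e2 := congrFun hMv 1
    have e3 := congrFun hMw 0
    have e4 := congrFun hMw 1
    simp only [Matrix.mulVec, dotProduct, Fin.sum_univ_two, Pi.smul_apply,
      smul_eq_mul] at e1 e2 e3 e4
    ext i j
    fin_cases i <;> fin_cases j <;>
      simp [hP, Matrix.mul_apply, Fin.sum_univ_two, Matrix.diagonal]
    · linear_combination e1
    · linear_combination e3
    · linear_combination e2
    · linear_combination e4
  calc M = M * P * P⁻¹ := (Matrix.mul_nonsing_inv_cancel_right (A := P) M hunit).symm
    _ = P * Matrix.diagonal ![a, b] * P⁻¹ := by rw [key]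

/-- Scalar matrices are diagonalizable. -/
lemma diag_of_scalar (c : ℂ) : IsDiagonalizable (c • (1 : Matrix (Fin 2) (Fin 2) ℂ)) := by
  refine ⟨1, by simp, fun _ => c, ?_⟩
  rw [inv_one, Matrix.one_mul, Matrix.mul_one, Matrix.smul_one_eq_diagonal]

/-- Structure of a non-diagonalizable matrix of determinant 1. -/
lemma struct (Aa : Matrix (Fin 2) (Fin 2) ℂ) (hdet : Aa.det = 1)
    (hnd : ¬ IsDiagonalizable Aa) :
    ∃ e : ℂ, e * e = 1 ∧
      (Aa - e • 1) * (Aa - e • 1) = 0 ∧ Aa - e • (1 : Matrix (Fin 2) (Fin 2) ℂ) ≠ 0 := by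
  have hd2 : Aa 0 0 * Aa 1 1 - Aa 0 1 * Aa 1 0 = 1 := by
    rw [← Matrix.det_fin_two]; exact hdet
  by_cases hdisc : (Aa 0 0 + Aa 1 1) * (Aa 0 0 + Aa 1 1) - 4 = 0
  · refine ⟨(Aa 0 0 + Aa 1 1) / 2, by linear_combination hdisc / 4, ?_, ?_⟩
    · ext i j
      fin_cases i <;> fin_cases j <;>
        simp [Matrix.mul_apply, Fin.sum_univ_two, Matrix.one_apply]
      · linear_combination hdisc / 4 - hd2
      · ring
      · ring
      · linear_combination hdisc / 4 - hd2
    · intro h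
      apply hnd
      rw [sub_eq_zero.mp h]
      exact diag_of_scalar _
  · exfalso
    apply hnd
    set t : ℂ := Aa 0 0 + Aa 1 1 with ht
    obtain ⟨s, hs⟩ : ∃ s : ℂ, s * s = t * t - 4 := by
      obtain ⟨s, hs⟩ := IsAlgClosed.exists_pow_nat_eq (t * t - 4) (n := 2) (by norm_num)
      exact ⟨s, by rw [← sq]; exact hs⟩
    have hs0 : s ≠ 0 := by
      intro h; rw [h] at hs; exact hdisc (by linear_combination -hs)
    have hroot1 : ((t+s)/2) * ((t+s)/2) - (Aa 0 0 + Aa 1 1) * ((t+s)/2) + Aa.det = 0 := by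
      rw [hdet, ← ht]; linear_combination hs / 4
    have hroot2 : ((t-s)/2) * ((t-s)/2) - (Aa 0 0 + Aa 1 1) * ((t-s)/2) + Aa.det = 0 := by
      rw [hdet, ← ht]; linear_combination hs / 4
    obtain ⟨v, hv, hMv⟩ := exists_eigvec Aa ((t+s)/2) hroot1
    obtain ⟨w, hw, hMw⟩ := exists_eigvec Aa ((t-s)/2) hroot2
    refine diag_of_two_eig Aa _ _ (fun hh => hs0 ?_) v w hv hw hMv hMw
    field_simp at hh
    linear_combination hh / 2

/-- Power formula for scalar + square-zero. -/
lemma pow_formula (e : ℂ) (N : Matrix (Fin 2) (Fin 2) ℂ) (hN2 : N * N = 0) :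
    ∀ k : ℕ, (e • 1 + N) ^ (k + 1) =
      e ^ (k+1) • (1 : Matrix (Fin 2) (Fin 2) ℂ) + (((k:ℂ)+1) * e ^ k) • N := by
  intro k
  induction k with
  | zero => simp
  | succ k ih =>
    rw [pow_succ, ih]
    simp only [add_mul, mul_add, smul_mul_assoc, mul_smul_comm, mul_one, one_mul, hN2,
      smul_zero, add_zero, smul_smul]
    push_cast
    module

/-- Main asymmetric lemma. -/
lemma main_lemma (m n : ℕ) (hm : 0 < m) (hn : 0 < n)
    (A B : Matrix (Fin 2) (Fin 2) ℂ) (hA : A.det = 1)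
    (h : A ^ m = B ^ n) (hndA : ¬ IsDiagonalizable A) :
    IsReduciblePair A B := by
  obtain ⟨e, he, hsq, hne⟩ := struct A hA hndA
  set N : Matrix (Fin 2) (Fin 2) ℂ := A - e • 1 with hNdef
  have hAeq : A = e • 1 + N := by rw [hNdef]; abel
  have he0 : e ≠ 0 := by intro h0; rw [h0] at he; simp at he
  have hdetN : N 0 0 * N 1 1 - N 0 1 * N 1 0 = 0 := by
    have hd := congrArg Matrix.det hsq
    rw [Matrix.det_mul, Matrix.det_zero] at hd
    rw [← Matrix.det_fin_two]
    exact mul_self_eq_zero.mp hd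
  obtain ⟨v, hv, hNv⟩ : ∃ v : Fin 2 → ℂ, v ≠ 0 ∧ N.mulVec v = 0 := by
    by_cases hrow1 : N 1 0 ≠ 0 ∨ N 1 1 ≠ 0
    · refine ⟨![N 1 1, -(N 1 0)], ?_, ?_⟩
      · intro hz
        rcases hrow1 with h' | h'
        · apply h'
          have := congrFun hz 1
          simpa using this
        · exact h' (congrFun hz 0)
      · rw [auxMulVec2]
        rw [show (0 : Fin 2 → ℂ) = ![0, 0] by funext i; fin_cases i <;> rfl]
        exact auxVec2Eq (by linear_combination hdetN) (by ring)
    · push_neg at hrow1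
      refine ⟨![N 0 1, -(N 0 0)], ?_, ?_⟩
      · intro hz
        apply hne
        ext i j
        fin_cases i <;> fin_cases j
        · show N 0 0 = 0
          have := congrFun hz 1
          simpa using this
        · show N 0 1 = 0
          exact congrFun hz 0
        · exact hrow1.1
        · exact hrow1.2
      · rw [auxMulVec2]
        rw [show (0 : Fin 2 → ℂ) = ![0, 0] by funext i; fin_cases i <;> rfl]
        exact auxVec2Eq (by ring) (by rw [hrow1.1, hrow1.2]; ring)
  have hAv : A.mulVec v = e • v := by
    rw [hAeq, Matrix.add_mulVec, hNv, add_zero, Matrix.smul_mulVec, Matrix.one_mulVec]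
  obtain ⟨k, rfl⟩ : ∃ k, m = k + 1 := ⟨m - 1, (Nat.succ_pred_eq_of_pos hm).symm⟩
  have hpow : A ^ (k+1) = e ^ (k+1) • 1 + (((k:ℂ)+1) * e ^ k) • N := by
    rw (occs := .pos [1]) [hAeq]
    exact pow_formula e N hsq k
  have hc0 : ((k:ℂ)+1) * e ^ k ≠ 0 :=
    mul_ne_zero (Nat.cast_add_one_ne_zero k) (pow_ne_zero _ he0)
  have hcomm : B * N = N * B := by
    have h1 : B * A ^ (k+1) = A ^ (k+1) * B := by
      rw [h, ← pow_succ, ← pow_succ']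
    rw [hpow] at h1
    simp only [mul_add, add_mul, mul_smul_comm, smul_mul_assoc, mul_one, one_mul] at h1
    have hc0' : (k:ℂ) * e ^ k + e ^ k ≠ 0 := by
      have hrw : (k:ℂ) * e ^ k + e ^ k = ((k:ℂ) + 1) * e ^ k := by ring
      rw [hrw]; exact hc0
    exact smul_right_injective _ hc0' (add_left_cancel h1)
  have hNBv : N.mulVec (B.mulVec v) = 0 := by
    rw [Matrix.mulVec_mulVec, ← hcomm, ← Matrix.mulVec_mulVec, hNv, Matrix.mulVec_zero]
  obtain ⟨μ, hμ⟩ := ker_dep N hne v (B.mulVec v) hv hNv hNBv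
  exact ⟨v, hv, ⟨e, hAv⟩, ⟨μ, hμ⟩⟩

theorem stmt2 (m n : ℕ) (hm : 0 < m) (hn : 0 < n)
    (A B : Matrix (Fin 2) (Fin 2) ℂ) (hA : A.det = 1) (hB : B.det = 1)
    (h : A ^ m = B ^ n) (hnd : ¬ IsDiagonalizable A ∨ ¬ IsDiagonalizable B) :
    IsReduciblePair A B := by
  rcases hnd with hndA | hndB
  · exact main_lemma m n hm hn A B hA h hndA
  · obtain ⟨v, hv, hb, ha⟩ := main_lemma n m hn hm B A hB h.symm hndB
    exact ⟨v, hv, ha, hb⟩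
end

section
/- Let m, n be positive integers and let A, B ∈ SL(2,ℂ) satisfy A^m = B^n. If the pair (A, B) is irreducible (no nonzero common eigenvector), then A^{2m} = Id, A² ≠ Id, B^{2n} = Id, and B² ≠ Id; in particular A^m = B^n equals Id or -Id. -/
open Matrix

lemma exists_eig (M : Matrix (Fin 2) (Fin 2) ℂ) :
    ∃ v : Fin 2 → ℂ, v ≠ 0 ∧ ∃ a : ℂ, M.mulVec v = a • v := by
  obtain ⟨μ, hμ⟩ := Module.End.exists_eigenvalue (M.mulVecLin)
  obtain ⟨v, hv⟩ := hμ.exists_hasEigenvector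
  exact ⟨v, hv.2, μ, by simpa using hv.apply_eq_smul⟩

lemma scalar_of_sq (A : Matrix (Fin 2) (Fin 2) ℂ) (hA : A.det = 1) (h2 : A ^ 2 = 1) :
    ∃ c : ℂ, A = c • 1 := by
  -- Cayley–Hamilton for 2×2 with det 1: A^2 = trace A • A - 1
  have hCH : A ^ 2 = A.trace • A - 1 := by
    have hch : !![A 0 0, A 0 1; A 1 0, A 1 1] ^ 2 =
        (A 0 0 + A 1 1) • !![A 0 0, A 0 1; A 1 0, A 1 1]
          - (A 0 0 * A 1 1 - A 0 1 * A 1 0) • 1 := by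
      rw [pow_two, Matrix.mul_fin_two]
      ext i j
      fin_cases i <;> fin_cases j <;> simp [Matrix.one_apply] <;> ring
    rw [← Matrix.eta_fin_two A] at hch
    rw [hch, Matrix.trace_fin_two, Matrix.det_fin_two] at *
    rw [hA, one_smul]
  rw [h2] at hCH
  by_cases ht : A.trace = 0
  · exfalso
    rw [ht, zero_smul] at hCH
    have := congrArg (fun M : Matrix (Fin 2) (Fin 2) ℂ => M 0 0) hCH
    simp [Matrix.one_apply] at this
    norm_num at this
  · refine ⟨2 / A.trace, ?_⟩
    have h4 : A.trace • A = 1 + 1 := sub_eq_iff_eq_add.mp hCH.symm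
    have h5 : (2 / A.trace) • (1 : Matrix (Fin 2) (Fin 2) ℂ) = A := by
      rw [div_eq_inv_mul, mul_smul, two_smul, ← h4, inv_smul_smul₀ ht]
    exact h5.symm
  
lemma scalar_of_commutes (A B C : Matrix (Fin 2) (Fin 2) ℂ)
    (hCA : C * A = A * C) (hCB : C * B = B * C) (hirr : ¬ IsReduciblePair A B) :
    ∃ μ : ℂ, C = μ • 1 := by
  obtain ⟨μ, hμ⟩ := Module.End.exists_eigenvalue (C.mulVecLin)
  refine ⟨μ, ?_⟩
  by_contra hC
  set E := Module.End.eigenspace (C.mulVecLin) μ with hE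
  obtain ⟨v, hv⟩ := hμ.exists_hasEigenvector
  have hvE : v ∈ E := hv.1
  have hv0 : v ≠ 0 := hv.2
  -- E ≠ ⊤
  have hEtop : E ≠ ⊤ := by
    intro htop
    apply hC
    have : ∀ w : Fin 2 → ℂ, C.mulVec w = μ • w := by
      intro w
      have hw : w ∈ E := htop ▸ Submodule.mem_top
      have := (Module.End.mem_eigenspace_iff.mp hw)
      simpa using this
    ext i j
    have := congrFun (this (Pi.single j 1)) i
    simpa [Matrix.mulVec_single, Matrix.smul_apply, Matrix.one_apply, Pi.single_apply,
      mul_comm] using this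
  have hfr : Module.finrank ℂ E ≤ 1 := by
    have h2 : Module.finrank ℂ (Fin 2 → ℂ) = 2 := by simp
    have := Submodule.finrank_lt hEtop
    omega
  have hspan : E = Submodule.span ℂ {v} := by
    refine (Submodule.eq_of_le_of_finrank_le ?_ ?_).symm
    · exact (Submodule.span_singleton_le_iff_mem v E).mpr hvE
    · rw [finrank_span_singleton hv0]; exact hfr
  -- E is invariant under A and B
  have hinv : ∀ M : Matrix (Fin 2) (Fin 2) ℂ, C * M = M * C →
      ∀ w ∈ E, M.mulVec w ∈ E := by
    intro M hM w hw
    have hw' : C.mulVec w = μ • w := by simpa using Module.End.mem_eigenspace_iff.mp hw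
    have : C.mulVec (M.mulVec w) = μ • (M.mulVec w) := by
      rw [Matrix.mulVec_mulVec, hM, ← Matrix.mulVec_mulVec, hw', Matrix.mulVec_smul]
    exact Module.End.mem_eigenspace_iff.mpr (by simpa using this)
  apply hirr
  refine ⟨v, hv0, ?_, ?_⟩
  · have := hinv A hCA v hvE
    rw [hspan] at this
    obtain ⟨a, ha⟩ := Submodule.mem_span_singleton.mp this
    exact ⟨a, ha.symm⟩
  · have := hinv B hCB v hvE
    rw [hspan] at this
    obtain ⟨b, hb⟩ := Submodule.mem_span_singleton.mp this
    exact ⟨b, hb.symm⟩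

theorem stmt4 (m n : ℕ) (hm : 0 < m) (hn : 0 < n)
    (A B : Matrix (Fin 2) (Fin 2) ℂ) (hA : A.det = 1) (hB : B.det = 1)
    (h : A ^ m = B ^ n) (hirr : ¬ IsReduciblePair A B) :
    A ^ (2 * m) = 1 ∧ A ^ 2 ≠ 1 ∧ B ^ (2 * n) = 1 ∧ B ^ 2 ≠ 1 ∧
      (A ^ m = 1 ∨ A ^ m = -1) := by
  set C := A ^ m with hC
  have hCA : C * A = A * C := Commute.pow_self A m
  have hCB : C * B = B * C := by rw [h]; exact Commute.pow_self B n
  obtain ⟨μ, hμ⟩ := scalar_of_commutes A B C hCA hCB hirr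
  have hdet : C.det = 1 := by rw [hC, Matrix.det_pow, hA, one_pow]
  have hμ2 : μ * μ = 1 := by
    have := hdet
    rw [hμ, Matrix.det_smul, Matrix.det_one, mul_one] at this
    simpa [pow_two, Fintype.card_fin] using this
  have hC2 : C ^ 2 = 1 := by
    rw [hμ, smul_pow, one_pow, pow_two, hμ2, one_smul]
  have hA2m : A ^ (2 * m) = 1 := by rw [mul_comm, pow_mul, ← hC, hC2]
  have hB2n : B ^ (2 * n) = 1 := by rw [mul_comm, pow_mul, ← h, hC2]
  have hAm : A ^ m = 1 ∨ A ^ m = -1 := by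
    rcases mul_self_eq_one_iff.mp hμ2 with h1 | h1
    · left; rw [← hC, hμ, h1, one_smul]
    · right; rw [← hC, hμ, h1, neg_smul, one_smul]
  refine ⟨hA2m, ?_, hB2n, ?_, hAm⟩
  · intro hsq
    obtain ⟨c, hc⟩ := scalar_of_sq A hA hsq
    apply hirr
    obtain ⟨v, hv0, b, hb⟩ := exists_eig B
    exact ⟨v, hv0, ⟨c, by rw [hc, Matrix.smul_mulVec, Matrix.one_mulVec]⟩, ⟨b, hb⟩⟩
  · intro hsq
    obtain ⟨c, hc⟩ := scalar_of_sq B hB hsq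
    apply hirr
    obtain ⟨v, hv0, a, ha⟩ := exists_eig A
    exact ⟨v, hv0, ⟨a, ha⟩, ⟨c, by rw [hc, Matrix.smul_mulVec, Matrix.one_mulVec]⟩⟩
end

section
/- Let m, n be positive integers. Let λ, μ ∈ ℂ satisfy λ^{2m} = 1, λ² ≠ 1, μ² ≠ 1 and λ^m = μ^n, and let r ∈ ℂ with r ≠ 0 and r ≠ 1. Set A = D_λ (the diagonal matrix diag(λ, λ⁻¹)) and B = Q_r D_μ Q_r⁻¹, where Q_r is the matrix with rows (1, r-1) and (1, r). Then A, B ∈ SL(2,ℂ), A^m = B^n, and the pair (A, B) is irreducible, i.e., A and B have no common nonzero eigenvector. -/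
open Matrix

/-- The diagonal matrix `diag(λ, λ⁻¹)`. -/
noncomputable def Dmat (l : ℂ) : Matrix (Fin 2) (Fin 2) ℂ := !![l, 0; 0, l⁻¹]

/-- The matrix with rows `(1, r-1)` and `(1, r)`. -/
def Qmat (r : ℂ) : Matrix (Fin 2) (Fin 2) ℂ := !![1, r - 1; 1, r]

lemma Qinv (r : ℂ) : (Qmat r)⁻¹ = !![r, 1-r; -1, 1] := by
  apply Matrix.inv_eq_right_inv
  ext i j; fin_cases i <;> fin_cases j <;>
    simp [Qmat, Matrix.mul_apply, Fin.sum_univ_two] <;> ring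

lemma Dpow (l : ℂ) (m : ℕ) : (Dmat l)^m = !![l^m, 0; 0, (l⁻¹)^m] := by
  have h : Dmat l = Matrix.diagonal ![l, l⁻¹] := by
    ext i j; fin_cases i <;> fin_cases j <;> simp [Dmat, Matrix.diagonal]
  rw [h, Matrix.diagonal_pow]
  ext i j; fin_cases i <;> fin_cases j <;> simp [Matrix.diagonal]

theorem stmt6 (m n : ℕ) (hm : 0 < m) (hn : 0 < n)
    (l mu r : ℂ) (hl : l ^ (2 * m) = 1) (hl2 : l ^ 2 ≠ 1) (hmu2 : mu ^ 2 ≠ 1)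
    (hlm : l ^ m = mu ^ n) (hr0 : r ≠ 0) (hr1 : r ≠ 1)
    (A B : Matrix (Fin 2) (Fin 2) ℂ)
    (hAdef : A = Dmat l) (hBdef : B = Qmat r * Dmat mu * (Qmat r)⁻¹) :
    A.det = 1 ∧ B.det = 1 ∧ A ^ m = B ^ n ∧ ¬ IsReduciblePair A B := by
  have hl0 : l ≠ 0 := by
    intro h; rw [h] at hl; simp [zero_pow, Nat.mul_ne_zero two_ne_zero hm.ne'] at hl
  have hmu0 : mu ≠ 0 := by
    intro h; rw [h] at hlm
    have : l ^ m = 0 := by rw [hlm]; exact zero_pow hn.ne'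
    exact hl0 (pow_eq_zero_iff hm.ne' |>.mp this)
  have hQ : Qmat r * (Qmat r)⁻¹ = 1 := by
    rw [Qinv]; ext i j; fin_cases i <;> fin_cases j <;>
      simp [Qmat, Matrix.mul_apply, Fin.sum_univ_two] <;> ring
  have hQ' : (Qmat r)⁻¹ * Qmat r = 1 := by
    rw [Qinv]; ext i j; fin_cases i <;> fin_cases j <;>
      simp [Qmat, Matrix.mul_apply, Fin.sum_univ_two] <;> ring
  -- the common value l^m, a square root of 1
  set c : ℂ := l ^ m with hc
  have hc2 : c * c = 1 := by
    rw [hc, ← pow_add, ← two_mul, hl]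
  have hcinv : c⁻¹ = c := inv_eq_of_mul_eq_one_right hc2
  have hlminv : (l⁻¹) ^ m = c := by rw [inv_pow, ← hc, hcinv]
  have hmuninv : (mu⁻¹) ^ n = c := by rw [inv_pow, ← hlm, hcinv]
  have hcId : !![c, 0; 0, c] = (c : ℂ) • (1 : Matrix (Fin 2) (Fin 2) ℂ) := by
    ext i j; fin_cases i <;> fin_cases j <;> simp
  have hAm : A ^ m = (c : ℂ) • 1 := by
    rw [hAdef, Dpow, hlminv, ← hc, ← hcId]
  have key : ∀ k : ℕ, (Qmat r * Dmat mu * (Qmat r)⁻¹) ^ k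
      = Qmat r * (Dmat mu) ^ k * (Qmat r)⁻¹ := by
    intro k
    induction k with
    | zero => simp [hQ]
    | succ k ih =>
      rw [pow_succ, ih, pow_succ]
      simp only [Matrix.mul_assoc]
      rw [← Matrix.mul_assoc ((Qmat r)⁻¹) (Qmat r), hQ', Matrix.one_mul]
  have hBn : B ^ n = (c : ℂ) • 1 := by
    rw [hBdef, key, Dpow, hmuninv, ← hlm, hcId]
    rw [Matrix.mul_smul, Matrix.mul_one, Matrix.smul_mul, hQ]
  refine ⟨?_, ?_, ?_, ?_⟩
  · rw [hAdef]; simp [Dmat, Matrix.det_fin_two_of, mul_inv_cancel₀ hl0]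
  · rw [hBdef, Matrix.det_mul, Matrix.det_mul]
    have hdQ : (Qmat r).det = 1 := by simp [Qmat, Matrix.det_fin_two_of]
    have hdQi : ((Qmat r)⁻¹).det = 1 := by rw [Qinv]; simp [Matrix.det_fin_two_of]
    have hdD : (Dmat mu).det = 1 := by
      simp [Dmat, Matrix.det_fin_two_of, mul_inv_cancel₀ hmu0]
    rw [hdQ, hdQi, hdD]; ring
  · rw [hAm, hBn]
  · rintro ⟨v, hv, ⟨a, ha⟩, ⟨b, hb⟩⟩
    have hBmat : B = !![r*mu - (r-1)*mu⁻¹, (r-1)*(mu⁻¹ - mu);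
                        r*(mu - mu⁻¹), (1-r)*mu + r*mu⁻¹] := by
      rw [hBdef, Qinv]
      ext i j; fin_cases i <;> fin_cases j <;>
        simp [Qmat, Dmat, Matrix.mul_apply, Fin.sum_univ_two] <;> ring
    have ha0 : l * v 0 = a * v 0 := by
      have := congrFun ha 0
      simpa [hAdef, Dmat, Matrix.mulVec, dotProduct, Fin.sum_univ_two] using this
    have ha1 : l⁻¹ * v 1 = a * v 1 := by
      have := congrFun ha 1
      simpa [hAdef, Dmat, Matrix.mulVec, dotProduct, Fin.sum_univ_two] using this
    have hb0 : (r*mu - (r-1)*mu⁻¹) * v 0 + (r-1)*(mu⁻¹ - mu) * v 1 = b * v 0 := by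
      have := congrFun hb 0
      simpa [hBmat, Matrix.mulVec, dotProduct, Fin.sum_univ_two] using this
    have hb1 : r*(mu - mu⁻¹) * v 0 + ((1-r)*mu + r*mu⁻¹) * v 1 = b * v 1 := by
      have := congrFun hb 1
      simpa [hBmat, Matrix.mulVec, dotProduct, Fin.sum_univ_two] using this
    have hmune : mu⁻¹ - mu ≠ 0 := by
      intro h
      apply hmu2
      have hinv : mu⁻¹ = mu := by linear_combination h
      rw [sq]
      nth_rewrite 2 [← hinv]
      exact mul_inv_cancel₀ hmu0
    have hcase : v 0 = 0 ∨ v 1 = 0 := by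
      by_contra h
      push_neg at h
      obtain ⟨h0, h1⟩ := h
      have e0 : l = a := by
        rcases mul_eq_mul_right_iff.mp ha0 with h | h
        · exact h
        · exact absurd h h0
      have e1 : l⁻¹ = a := by
        rcases mul_eq_mul_right_iff.mp ha1 with h | h
        · exact h
        · exact absurd h h1
      have h2 : l = l⁻¹ := e0.trans e1.symm
      apply hl2
      rw [sq]
      nth_rewrite 2 [h2]
      exact mul_inv_cancel₀ hl0
    rcases hcase with h0 | h1
    · have h1 : v 1 ≠ 0 := by
        intro h1
        apply hv
        funext i; fin_cases i <;> simp [h0, h1]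
      rw [h0] at hb0
      have hz : (r - 1) * (mu⁻¹ - mu) * v 1 = 0 := by linear_combination hb0
      rcases mul_eq_zero.mp hz with h | h
      · rcases mul_eq_zero.mp h with h' | h'
        · exact hr1 (by linear_combination h')
        · exact hmune h'
      · exact h1 h
    · have h0 : v 0 ≠ 0 := by
        intro h0
        apply hv
        funext i; fin_cases i <;> simp [h0, h1]
      rw [h1] at hb1
      have hz : r * (mu - mu⁻¹) * v 0 = 0 := by linear_combination hb1
      rcases mul_eq_zero.mp hz with h | h
      · rcases mul_eq_zero.mp h with h' | h'
        · exact hr0 h'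
        · apply hmune; linear_combination -h'
      · exact h0 h
end

section
/- Let G be a group and let λ, λ' : G → ℂ* be two group homomorphisms such that λ(g) + λ(g)⁻¹ = λ'(g) + λ'(g)⁻¹ for every g ∈ G. Then either λ' = λ, or λ'(g) = λ(g)⁻¹ for all g ∈ G. -/
lemma key9 (x y : ℂˣ) (h : (x : ℂ) + (x : ℂ)⁻¹ = (y : ℂ) + (y : ℂ)⁻¹) :
    y = x ∨ y = x⁻¹ := by
  have hx : (x : ℂ) ≠ 0 := x.ne_zero
  have hy : (y : ℂ) ≠ 0 := y.ne_zero
  have h2 : ((y : ℂ) - x) * ((x : ℂ) * y - 1) = 0 := by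
    field_simp at h
    linear_combination -h
  rcases mul_eq_zero.mp h2 with h3 | h3
  · exact Or.inl (Units.ext (sub_eq_zero.mp h3))
  · right
    refine Units.ext ?_
    rw [Units.val_inv_eq_inv_val]
    exact eq_inv_of_mul_eq_one_right (by linear_combination h3)

theorem stmt9 (G : Type*) [Group G] (l l' : G →* ℂˣ)
    (h : ∀ g : G, (l g : ℂ) + (l g : ℂ)⁻¹ = (l' g : ℂ) + (l' g : ℂ)⁻¹) :
    (∀ g : G, l' g = l g) ∨ (∀ g : G, l' g = (l g)⁻¹) := by
  by_contra hc
  push_neg at hc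
  obtain ⟨⟨a, ha⟩, ⟨b, hb⟩⟩ := hc
  have ha' : l' a = (l a)⁻¹ := (key9 _ _ (h a)).resolve_left ha
  have hb' : l' b = l b := (key9 _ _ (h b)).resolve_right hb
  have kab := key9 (l (a * b)) (l' (a * b)) (h (a * b))
  rw [map_mul, map_mul, ha', hb'] at kab
  rcases kab with h3 | h3
  · have : (l a)⁻¹ = l a := mul_right_cancel h3
    exact ha (ha'.trans this)
  · rw [mul_inv] at h3
    have : l b = (l b)⁻¹ := mul_left_cancel h3
    exact hb (hb'.trans this)
end

section
/- Let m, n be coprime positive integers and let t, u ∈ ℂ*. If t^n + t^{-n} = u^n + u^{-n}, t^m + t^{-m} = u^m + u^{-m}, and t^{n+m} + t^{-(n+m)} = u^{n+m} + u^{-(n+m)}, then u = t or u = t⁻¹. -/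
private lemma key (x y : ℂ) (hx : x ≠ 0) (hy : y ≠ 0)
    (h : x + x⁻¹ = y + y⁻¹) : y = x ∨ x * y = 1 := by
  have h' : (y - x) * (x * y - 1) = 0 := by
    field_simp at h
    linear_combination -h
  rcases mul_eq_zero.1 h' with h'' | h''
  · left; linear_combination h''
  · right; linear_combination h''

private lemma key2 (m n : ℕ) (hcop : Nat.Coprime m n) (z : ℂ) (hz : z ≠ 0)
    (hm : z ^ m = 1) (hn : z ^ n = 1) : z = 1 := by
  have hb : (1 : ℤ) = m * Nat.gcdA m n + n * Nat.gcdB m n := by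
    have := Nat.gcd_eq_gcd_ab m n
    rw [hcop] at this; exact_mod_cast this
  have : z ^ (1 : ℤ) = 1 := by
    rw [hb, zpow_add₀ hz, zpow_mul, zpow_mul]
    norm_cast
    rw [hm, hn, one_zpow, one_zpow, one_mul]
  simpa using this

theorem stmt10 (m n : ℕ) (hm : 0 < m) (hn : 0 < n) (hcop : Nat.Coprime m n)
    (t u : ℂ) (ht : t ≠ 0) (hu : u ≠ 0)
    (h1 : t ^ n + (t ^ n)⁻¹ = u ^ n + (u ^ n)⁻¹)
    (h2 : t ^ m + (t ^ m)⁻¹ = u ^ m + (u ^ m)⁻¹)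
    (h3 : t ^ (n + m) + (t ^ (n + m))⁻¹ = u ^ (n + m) + (u ^ (n + m))⁻¹) :
    u = t ∨ u = t⁻¹ := by
  have htn := pow_ne_zero n ht
  have htm := pow_ne_zero m ht
  have hun := pow_ne_zero n hu
  have hum := pow_ne_zero m hu
  have c1 := key _ _ htn hun h1
  have c2 := key _ _ htm hum h2
  have c3 := key _ _ (pow_ne_zero (n+m) ht) (pow_ne_zero (n+m) hu) h3
  rw [pow_add, pow_add] at c3
  -- helper: u = t case
  have caseA : u ^ n = t ^ n → u ^ m = t ^ m → u = t := by
    intro a b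
    have : (u / t) ^ n = 1 := by rw [div_pow, a, div_self htn]
    have h2' : (u / t) ^ m = 1 := by rw [div_pow, b, div_self htm]
    have := key2 m n hcop (u / t) (div_ne_zero hu ht) h2' this
    field_simp at this; exact this
  have caseB : t ^ n * u ^ n = 1 → t ^ m * u ^ m = 1 → u = t⁻¹ := by
    intro a b
    have hn' : (t * u) ^ n = 1 := by rw [mul_pow]; exact a
    have hm' : (t * u) ^ m = 1 := by rw [mul_pow]; exact b
    have := key2 m n hcop (t * u) (mul_ne_zero ht hu) hm' hn'
    field_simp
    linear_combination this
  rcases c1 with c1 | c1 <;> rcases c2 with c2 | c2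
  · exact Or.inl (caseA c1 c2)
  · -- u^n = t^n, t^m * u^m = 1
    rcases c3 with c3 | c3
    · -- u^n u^m = t^n t^m ⟹ u^m = t^m
      left
      apply caseA c1
      have : u ^ n * u ^ m = t ^ n * u ^ m := by rw [c1]
      have hm2 : t ^ n * u ^ m = t ^ n * t ^ m := by rw [← this, c3]
      exact mul_left_cancel₀ htn hm2
    · -- t^n t^m * (u^n u^m) = 1, with u^n = t^n and t^m u^m = 1
      right
      apply caseB ?_ c2
      calc t ^ n * u ^ n = t ^ n * t ^ n := by rw [c1]
        _ = t ^ n * t ^ n * (t ^ m * u ^ m) := by rw [c2, mul_one]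
        _ = 1 := by linear_combination c3 - t ^ n * t ^ m * u ^ m * c1
  · -- symmetric: u^m = t^m, t^n * u^n = 1
    rcases c3 with c3 | c3
    · left
      apply caseA ?_ c2
      have : u ^ n * u ^ m = u ^ n * t ^ m := by rw [c2]
      have hn2 : u ^ n * t ^ m = t ^ n * t ^ m := by rw [← this, c3]
      exact (mul_right_cancel₀ htm hn2)
    · right
      apply caseB c1
      calc t ^ m * u ^ m = (t ^ n * u ^ n) * ((t ^ m) * u ^ m) := by rw [c1, one_mul]
        _ = 1 := by linear_combination c3
  · exact Or.inr (caseB c1 c2)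
end

section
/- For a natural number k, let p_k denote the k-th Dickson polynomial of the first kind with parameter 1 over ℂ, characterized by p_k(t + t⁻¹) = t^k + t^{-k} for all t ∈ ℂ*. Let m, n be coprime positive integers. Then for every s ∈ ℂ, the three derivatives p_n'(s), p_m'(s), p_{m+n}'(s) are not all zero. -/
open Polynomial

open Polynomial.Chebyshev in
lemma U_eval_one_aux : ∀ k : ℕ, (U ℂ k).eval 1 = k + 1 ∧ (U ℂ k).eval (-1) = (-1) ^ k * (k + 1)
  | 0 => by simp [U_zero]
  | 1 => by simp [U_one]; norm_num
  | (k + 2) => by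
    have h1 := (U_eval_one_aux k).1
    have h2 := (U_eval_one_aux k).2
    have h3 := (U_eval_one_aux (k + 1)).1
    have h4 := (U_eval_one_aux (k + 1)).2
    have : ((k + 2 : ℕ) : ℤ) = (k : ℤ) + 2 := by push_cast; ring
    rw [this, U_add_two]
    constructor
    · simp only [eval_sub, eval_mul, eval_ofNat, eval_X]
      rw [show ((k : ℤ) + 1) = ((k + 1 : ℕ) : ℤ) by push_cast; ring] at *
      rw [h3, h1]
      push_cast; ring
    · simp only [eval_sub, eval_mul, eval_ofNat, eval_X]
      rw [show ((k : ℤ) + 1) = ((k + 1 : ℕ) : ℤ) by push_cast; ring] at *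
      rw [h4, h2]
      push_cast; ring

open Polynomial.Chebyshev in
lemma dickson_deriv_eval (k : ℕ) (s : ℂ) :
    (derivative (dickson 1 (1 : ℂ) k)).eval s = k * (U ℂ ((k : ℤ) - 1)).eval (s / 2) := by
  rw [dickson_one_one_eq_chebyshev_T, derivative_mul, derivative_comp, T_derivative_eq_U]
  simp [eval_comp, invOf_eq_inv]
  ring_nf
  tauto

theorem stmt11 (m n : ℕ) (hm : 0 < m) (hn : 0 < n) (hcop : Nat.Coprime m n) (s : ℂ) :
    ¬ ((derivative (dickson 1 (1 : ℂ) n)).eval s = 0 ∧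
        (derivative (dickson 1 (1 : ℂ) m)).eval s = 0 ∧
        (derivative (dickson 1 (1 : ℂ) (m + n))).eval s = 0) := by
  rintro ⟨h1, h2, -⟩
  rw [dickson_deriv_eval] at h1 h2
  have hn0 : (n : ℂ) ≠ 0 := Nat.cast_ne_zero.mpr hn.ne'
  have hm0 : (m : ℂ) ≠ 0 := Nat.cast_ne_zero.mpr hm.ne'
  have hU1 : (Polynomial.Chebyshev.U ℂ ((n : ℤ) - 1)).eval (s / 2) = 0 := by
    rcases mul_eq_zero.mp h1 with h | h
    · exact absurd h hn0
    · exact h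
  have hU2 : (Polynomial.Chebyshev.U ℂ ((m : ℤ) - 1)).eval (s / 2) = 0 := by
    rcases mul_eq_zero.mp h2 with h | h
    · exact absurd h hm0
    · exact h
  obtain ⟨θ, hθ⟩ := Complex.cos_surjective (s / 2)
  rw [← hθ] at hU1 hU2
  by_cases hs : Complex.sin θ = 0
  · -- cos θ = ±1
    rcases Complex.sin_eq_zero_iff_cos_eq.mp hs with hc | hc
    · have := (U_eval_one_aux (n - 1)).1
      rw [show ((n - 1 : ℕ) : ℤ) = (n : ℤ) - 1 by omega] at this
      rw [hc, this] at hU1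
      have : ((n - 1 : ℕ) : ℂ) + 1 = (n : ℂ) := by
        have : ((n - 1 : ℕ) : ℂ) = (n : ℂ) - 1 := by
          push_cast [Nat.cast_sub hn]; ring
        rw [this]; ring
      rw [this] at hU1
      exact hn0 hU1
    · have := (U_eval_one_aux (n - 1)).2
      rw [show ((n - 1 : ℕ) : ℤ) = (n : ℤ) - 1 by omega] at this
      rw [hc, this] at hU1
      have hne : ((n - 1 : ℕ) : ℂ) + 1 = (n : ℂ) := by
        have : ((n - 1 : ℕ) : ℂ) = (n : ℂ) - 1 := by
          push_cast [Nat.cast_sub hn]; ring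
        rw [this]; ring
      rw [hne] at hU1
      rcases mul_eq_zero.mp hU1 with h | h
      · exact pow_ne_zero _ (by norm_num : (-1 : ℂ) ≠ 0) h
      · exact hn0 h
  · -- sin θ ≠ 0 : sin (n θ) = 0 and sin (m θ) = 0
    have key : ∀ k : ℕ, 0 < k → (Polynomial.Chebyshev.U ℂ ((k : ℤ) - 1)).eval (Complex.cos θ) = 0 →
        ∃ a : ℤ, (k : ℂ) * θ = a * Real.pi := by
      intro k hk hU
      have := Polynomial.Chebyshev.U_complex_cos θ ((k : ℤ) - 1)
      rw [hU, zero_mul] at this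
      have hsin : Complex.sin ((k : ℂ) * θ) = 0 := by
        have h' : (((k : ℤ) - 1 : ℤ) : ℂ) + 1 = (k : ℂ) := by push_cast; ring
        rw [h'] at this
        exact this.symm
      rcases Complex.sin_eq_zero_iff.mp hsin with ⟨a, ha⟩
      exact ⟨a, ha⟩
    obtain ⟨a, ha⟩ := key n hn hU1
    obtain ⟨b, hb⟩ := key m hm hU2
    -- coprimality: ∃ u v : ℤ, u * m + v * n = 1
    have hco : IsCoprime (m : ℤ) (n : ℤ) := Int.isCoprime_iff_gcd_eq_one.mpr (by
      simpa [Int.gcd_natCast_natCast] using hcop)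
    obtain ⟨u, v, huv⟩ := hco
    have : θ = ((u * b + v * a : ℤ) : ℂ) * Real.pi := by
      have h' : ((u * m + v * n : ℤ) : ℂ) * θ = ((u * b + v * a : ℤ) : ℂ) * Real.pi := by
        push_cast
        calc (u * m + v * n : ℂ) * θ = u * ((m : ℂ) * θ) + v * ((n : ℂ) * θ) := by ring
        _ = u * (b * Real.pi) + v * (a * Real.pi) := by rw [ha, hb]
        _ = (u * b + v * a : ℂ) * Real.pi := by ring
      rw [huv] at h'
      simpa using h'
    apply hs
    rw [this]
    exact Complex.sin_int_mul_pi _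
end

section
/- Let m, n be coprime positive integers. The set {(tr A, tr B, tr(AB)) : A, B ∈ SL(2,ℂ), A^m = B^n} ⊆ ℂ³ is equal to the union of the set {(t^n + t^{-n}, t^m + t^{-m}, t^{n+m} + t^{-(n+m)}) : t ∈ ℂ*} and the set {(λ + λ⁻¹, μ + μ⁻¹, z) : λ, μ, z ∈ ℂ, λ^{2m} = 1, λ² ≠ 1, μ² ≠ 1, λ^m = μ^n}. -/
open Matrix

namespace Stmt12Aux

abbrev M2 := Matrix (Fin 2) (Fin 2) ℂ

lemma ch (M : M2) (h : M.det = 1) : M * M = M.trace • M - 1 := by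
  rw [Matrix.det_fin_two] at h
  ext i j
  fin_cases i <;> fin_cases j <;>
    simp [Matrix.mul_apply, Matrix.trace_fin_two, Fin.sum_univ_two, Matrix.one_apply] <;>
    first
    | ring1
    | linear_combination -h
    | linear_combination h
    | linear_combination -2*h
    | linear_combination 2*h

lemma exists_lam (s : ℂ) : ∃ l : ℂ, l ≠ 0 ∧ s = l + l⁻¹ := by
  obtain ⟨r, hr⟩ := Complex.isAlgClosed.exists_pow_nat_eq (s ^ 2 - 4) two_pos
  have key : (s + r) / 2 * ((s - r) / 2) = 1 := by
    have : r ^ 2 = s ^ 2 - 4 := hr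
    field_simp
    linear_combination -this
  have h0 : (s + r) / 2 ≠ 0 := by
    intro h0; rw [h0, zero_mul] at key; exact zero_ne_one key
  have hinv : ((s + r) / 2)⁻¹ = (s - r) / 2 := inv_eq_of_mul_eq_one_right key
  exact ⟨(s + r) / 2, h0, by rw [hinv]; ring⟩
lemma cheb (M : M2) (h : M.det = 1) (l : ℂ) (hl : l ≠ 0) (hs : M.trace = l + l⁻¹) (k : ℕ) :
    ∃ p q : ℂ, M ^ k = p • M + q • 1 ∧ p * l + q = l ^ k ∧ p * l⁻¹ + q = l⁻¹ ^ k := by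
  induction k with
  | zero => exact ⟨0, 1, by simp, by simp, by simp⟩
  | succ k ih =>
    obtain ⟨p, q, hM, h1, h2⟩ := ih
    refine ⟨p * M.trace + q, -p, ?_, ?_, ?_⟩
    · rw [pow_succ, hM, add_mul, smul_mul_assoc, smul_mul_assoc, ch M h, one_mul]
      rw [smul_sub, smul_smul]
      ext i j
      simp [Matrix.add_apply, Matrix.sub_apply, Matrix.smul_apply, Matrix.one_apply]
      ring
    · rw [hs]
      have : l * l⁻¹ = 1 := mul_inv_cancel₀ hl
      rw [pow_succ]
      linear_combination l * h1 + p * this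
    · rw [hs]
      have : l * l⁻¹ = 1 := mul_inv_cancel₀ hl
      rw [pow_succ]
      linear_combination l⁻¹ * h2 + p * this

lemma linv (l : ℂ) (hl2 : l * l = 1) : l⁻¹ = l := inv_eq_of_mul_eq_one_right hl2

lemma lne (l : ℂ) (hl : l ≠ 0) (hl2 : l * l ≠ 1) : l - l⁻¹ ≠ 0 := by
  intro h
  apply hl2
  rw [sub_eq_zero] at h
  have h2 : l * l = l * l⁻¹ := by rw [← h]
  rw [mul_inv_cancel₀ hl] at h2
  exact h2

lemma smul_one_entry (c : ℂ) : (c • (1 : M2)) 0 0 = c := by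
  simp

lemma pow_eq_scalar (M : M2) (h : M.det = 1) (l : ℂ) (hl : l ≠ 0) (hs : M.trace = l + l⁻¹)
    (hl2 : l * l ≠ 1) (k : ℕ) (hk : l ^ k * l ^ k = 1) : M ^ k = (l ^ k) • 1 := by
  obtain ⟨p, q, hM, h1, h2⟩ := cheb M h l hl hs k
  have hinv : l⁻¹ ^ k = l ^ k := by rw [inv_pow, linv _ hk]
  have hp : p = 0 := by
    have hd : p * (l - l⁻¹) = 0 := by
      rw [hinv] at h2
      linear_combination h1 - h2
    rcases mul_eq_zero.mp hd with h' | h'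
    · exact h'
    · exact absurd h' (lne l hl hl2)
  have hq : q = l ^ k := by rw [hp] at h1; linear_combination h1
  rw [hM, hp, hq, zero_smul, zero_add]

lemma eig_pow_scalar (A : M2) (h : A.det = 1) (l : ℂ) (hl : l ≠ 0) (hs : A.trace = l + l⁻¹)
    (hl2 : l * l ≠ 1) (k : ℕ) (c : ℂ) (hA : A ^ k = c • 1) : l ^ k = c := by
  obtain ⟨p, q, hM, h1, h2⟩ := cheb A h l hl hs k
  have hll : l * l⁻¹ = 1 := mul_inv_cancel₀ hl
  have hp : p = 0 := by
    by_contra hp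
    have h3 : p • A = (c - q) • (1 : M2) := by
      rw [hA] at hM
      rw [sub_smul, eq_sub_iff_add_eq, ← hM]
    have hAs : A = (p⁻¹ * (c - q)) • 1 := by
      calc A = p⁻¹ • (p • A) := by rw [smul_smul, inv_mul_cancel₀ hp, one_smul]
        _ = (p⁻¹ * (c - q)) • 1 := by rw [h3, smul_smul]
    set α := p⁻¹ * (c - q) with hα
    have hdet : α * α = 1 := by
      rw [hAs, Matrix.det_smul, Matrix.det_one] at h
      simpa [sq, Fintype.card_fin] using h
    have hee : l + l⁻¹ = α + α := by
      rw [← hs, hAs, Matrix.trace_smul, Matrix.trace_one]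
      simp
      ring
    have hsq : (l - α) * (l - α) = 0 := by
      linear_combination hdet + l * hee - hll
    have : l = α := by
      rcases mul_eq_zero.mp hsq with h' | h' <;> linear_combination h'
    exact hl2 (this ▸ hdet)
  have hq : q = c := by
    rw [hA, hp, zero_smul, zero_add] at hM
    have := congrArg (fun X : M2 => X 0 0) hM
    simpa using this.symm
  rw [hp] at h1
  linear_combination hq - h1

lemma expand2 (a b c : ℂ) (X : M2) :
    (a • 1 + b • X) * (c • 1 + X) = (a*c) • 1 + (a + b*c) • X + b • (X*X) := by
  simp only [mul_add, add_mul, smul_mul_assoc, mul_smul_comm, smul_smul, one_mul, mul_one]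
  module

lemma unipotent_case (A : M2) (h : A.det = 1) (l : ℂ) (hl2 : l * l = 1)
    (hs : A.trace = l + l⁻¹) (k : ℕ) (hk : 0 < k) (c : ℂ) (hA : A ^ k = c • 1) :
    A = l • 1 ∧ l ^ k = c := by
  have hl : l ≠ 0 := by
    intro h0; rw [h0, zero_mul] at hl2; exact zero_ne_one hl2
  have hli : l⁻¹ = l := linv l hl2
  set N := A - l • 1 with hN
  have hA' : A = l • 1 + N := by rw [hN]; abel
  have hdet : A 0 0 * A 1 1 - A 0 1 * A 1 0 = 1 := by
    rw [Matrix.det_fin_two] at h; exact h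
  have htr : A 0 0 + A 1 1 = 2 * l := by
    rw [Matrix.trace_fin_two, hli] at hs
    linear_combination hs
  have hNN : N * N = 0 := by
    ext i j
    fin_cases i <;> fin_cases j <;>
      simp [hN, Matrix.mul_apply, Fin.sum_univ_two, Matrix.sub_apply,
        Matrix.smul_apply, Matrix.one_apply] <;>
      first
      | linear_combination -hdet + A 0 0 * htr + hl2
      | linear_combination -hdet + A 1 1 * htr + hl2
      | linear_combination A 0 1 * htr
      | linear_combination A 1 0 * htr
  have key : ∀ j : ℕ, A ^ j = (l ^ j) • 1 + ((j : ℂ) * l ^ (j+1)) • N := by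
    intro j
    induction j with
    | zero => simp
    | succ j ih =>
      rw [pow_succ, ih]
      rw [hA']
      rw [expand2, hNN, smul_zero, add_zero]
      have hc1 : l ^ j * l = l ^ (j+1) := by rw [pow_succ]
      have hc2 : (l ^ j : ℂ) + ((j : ℂ) * l ^ (j+1)) * l = ((j+1 : ℕ) : ℂ) * l ^ (j+1+1) := by
        push_cast
        linear_combination (-(l^j)) * hl2
      rw [hc1, hc2]
  have hkey := key k
  rw [hA] at hkey
  have hsub : ((k : ℂ) * l ^ (k+1)) • N = (c - l ^ k) • (1 : M2) := by
    rw [sub_smul, eq_sub_iff_add_eq, add_comm]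
    exact hkey.symm
  have hcoef : (k : ℂ) * l ^ (k+1) ≠ 0 :=
    mul_ne_zero (Nat.cast_ne_zero.mpr hk.ne') (pow_ne_zero _ hl)
  have hc0 : c - l ^ k = 0 := by
    have hsq : ((c - l ^ k) * (c - l ^ k)) • (1 : M2) = 0 := by
      have h2 : ((c - l ^ k) • (1 : M2)) * ((c - l ^ k) • (1 : M2)) = 0 := by
        rw [← hsub, smul_mul_assoc, mul_smul_comm, hNN, smul_zero, smul_zero]
      rw [← h2, smul_mul_assoc, mul_smul_comm, mul_one, smul_smul]
    have h00 : (c - l ^ k) * (c - l ^ k) = 0 := by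
      have := congrArg (fun X : M2 => X 0 0) hsq
      simpa using this
    exact mul_self_eq_zero.mp h00
  have hN0 : N = 0 := by
    rw [hc0, zero_smul] at hsub
    rcases smul_eq_zero.mp hsub with h' | h'
    · exact absurd h' hcoef
    · exact h'
  constructor
  · rw [hA', hN0, add_zero]
  · rw [sub_eq_zero] at hc0; exact hc0.symm

lemma tri_pow (X : M2) (h : X 1 0 = 0) (k : ℕ) :
    (X ^ k) 1 0 = 0 ∧ (X ^ k) 0 0 = (X 0 0) ^ k ∧ (X ^ k) 1 1 = (X 1 1) ^ k := by
  induction k with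
  | zero => simp [Matrix.one_apply]
  | succ k ih =>
    obtain ⟨ih1, ih2, ih3⟩ := ih
    refine ⟨?_, ?_, ?_⟩ <;>
      simp only [pow_succ, Matrix.mul_apply, Fin.sum_univ_two, ih1, ih2, ih3, h] <;> ring

lemma commutant_tri (T X : M2) (hT : T 1 0 = 0)
    (hns : T 0 0 ≠ T 1 1 ∨ T 0 1 ≠ 0) (hc : X * T = T * X) : X 1 0 = 0 := by
  have e10 := congrArg (fun M : M2 => M 1 0) hc
  have e00 := congrArg (fun M : M2 => M 0 0) hc
  simp only [Matrix.mul_apply, Fin.sum_univ_two] at e10 e00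
  rw [hT] at e10 e00
  rcases hns with h | h
  · have : X 1 0 * (T 0 0 - T 1 1) = 0 := by linear_combination e10
    rcases mul_eq_zero.mp this with h' | h'
    · exact h'
    · exact absurd (by linear_combination h') h
  · have : T 0 1 * X 1 0 = 0 := by linear_combination -e00
    rcases mul_eq_zero.mp this with h' | h'
    · exact absurd h' h
    · exact h'

lemma triangularize (C : M2) : ∃ P Q : M2, P * Q = 1 ∧ Q * P = 1 ∧ (Q * C * P) 1 0 = 0 := by
  by_cases h01 : C 0 1 = 0
  · refine ⟨!![0,1;1,0], !![0,1;1,0], ?_, ?_, ?_⟩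
    · ext i j
      fin_cases i <;> fin_cases j <;>
        simp [Matrix.mul_apply, Fin.sum_univ_two, Matrix.one_apply]
    · ext i j
      fin_cases i <;> fin_cases j <;>
        simp [Matrix.mul_apply, Fin.sum_univ_two, Matrix.one_apply]
    · simp only [Matrix.mul_apply, Fin.sum_univ_two]
      simp
      exact h01
  · obtain ⟨r, hr⟩ := Complex.isAlgClosed.exists_pow_nat_eq (C.trace ^ 2 - 4 * C.det) two_pos
    set s := C.trace with hs
    set d := C.det with hd
    set a := (s + r) / 2 with ha
    have hroot : a * a - s * a + d = 0 := by
      have hr' : r ^ 2 = s ^ 2 - 4 * d := hr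
      have : a * a - s * a + d = (r ^ 2 - (s ^ 2 - 4 * d)) / 4 := by rw [ha]; ring
      rw [this, hr']
      simp
    have hdet : C 0 0 * C 1 1 - C 0 1 * C 1 0 = d := by
      rw [hd, Matrix.det_fin_two]
    have htr : C 0 0 + C 1 1 = s := by rw [hs, Matrix.trace_fin_two]
    set w := (C 0 1)⁻¹ with hw
    have hinv : w * C 0 1 = 1 := inv_mul_cancel₀ h01
    refine ⟨!![C 0 1, 0; a - C 0 0, 1], !![w, 0; -(a - C 0 0) * w, 1], ?_, ?_, ?_⟩
    · ext i j
      fin_cases i <;> fin_cases j <;>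
        simp [Matrix.mul_apply, Fin.sum_univ_two, Matrix.one_apply] <;>
        first
        | ring1
        | linear_combination hinv
        | linear_combination (a - C 0 0) * hinv
        | linear_combination (-(a - C 0 0)) * hinv
    · ext i j
      fin_cases i <;> fin_cases j <;>
        simp [Matrix.mul_apply, Fin.sum_univ_two, Matrix.one_apply] <;>
        first
        | ring1
        | linear_combination hinv
        | linear_combination (a - C 0 0) * hinv
        | linear_combination (-(a - C 0 0)) * hinv
    · rw [Matrix.mul_apply, Fin.sum_univ_two, Matrix.mul_apply, Matrix.mul_apply,
        Fin.sum_univ_two, Fin.sum_univ_two]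
      norm_num
      linear_combination ((C 0 0 - a) * C 0 0 + (C 0 0 - a) * (a - C 0 0)) * hinv
        - hroot - hdet + a * htr

lemma mconj_pow (P Q A : M2) (hPQ : P * Q = 1) (hQP : Q * P = 1) (k : ℕ) :
    (Q * A * P) ^ k = Q * A ^ k * P := by
  induction k with
  | zero => rw [pow_zero, pow_zero, mul_one, hQP]
  | succ k ih =>
    rw [pow_succ, ih, pow_succ]
    calc Q * A ^ k * P * (Q * A * P) = Q * A ^ k * (P * Q) * A * P := by
          noncomm_ring
      _ = Q * (A ^ k * A) * P := by rw [hPQ, mul_one]; noncomm_ring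

lemma nonscalar_case (A B : M2) (hA : A.det = 1) (hB : B.det = 1) (m n : ℕ)
    (hpow : A ^ m = B ^ n) (hns : ∀ c : ℂ, A ^ m ≠ c • 1) :
    ∃ a b : ℂ, a ≠ 0 ∧ b ≠ 0 ∧ A.trace = a + a⁻¹ ∧ B.trace = b + b⁻¹ ∧
      (A * B).trace = a * b + (a * b)⁻¹ ∧ a ^ m = b ^ n := by
  obtain ⟨P, Q, hPQ, hQP, hT⟩ := triangularize (A ^ m)
  set A₁ := Q * A * P with hA₁
  set B₁ := Q * B * P with hB₁
  set T := Q * (A ^ m) * P with hTdef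
  have hApow : A₁ ^ m = T := by rw [hA₁, mconj_pow P Q A hPQ hQP]
  have hBpow : B₁ ^ n = T := by rw [hB₁, mconj_pow P Q B hPQ hQP, hTdef, hpow]
  have hTns : T 0 0 ≠ T 1 1 ∨ T 0 1 ≠ 0 := by
    by_contra hcon
    push_neg at hcon
    obtain ⟨h1, h2⟩ := hcon
    apply hns (T 0 0)
    have hTeq : T = T 0 0 • 1 := by
      ext i j
      fin_cases i <;> fin_cases j <;>
        simp [Matrix.smul_apply, Matrix.one_apply, h2, hT, h1]
    have hback : A ^ m = P * T * Q := by
      rw [hTdef]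
      calc A ^ m = (P * Q) * A ^ m * (P * Q) := by rw [hPQ]; noncomm_ring
        _ = P * (Q * A ^ m * P) * Q := by noncomm_ring
    rw [hback, hTeq]
    simp only [Matrix.smul_apply, Matrix.one_apply_eq, smul_eq_mul, mul_one]
    rw [mul_smul_comm, mul_one, smul_mul_assoc, hPQ]
  have hAcomm : A₁ * T = T * A₁ := by
    rw [← hApow, ← pow_succ, ← pow_succ']
  have hBcomm : B₁ * T = T * B₁ := by
    rw [← hBpow, ← pow_succ, ← pow_succ']
  have hA10 : A₁ 1 0 = 0 := commutant_tri T A₁ hT hTns hAcomm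
  have hB10 : B₁ 1 0 = 0 := commutant_tri T B₁ hT hTns hBcomm
  have hdetPQ : P.det * Q.det = 1 := by
    rw [← Matrix.det_mul, hPQ, Matrix.det_one]
  have hdetA₁ : A₁.det = 1 := by
    rw [hA₁, Matrix.det_mul, Matrix.det_mul, hA]
    linear_combination hdetPQ
  have hdetB₁ : B₁.det = 1 := by
    rw [hB₁, Matrix.det_mul, Matrix.det_mul, hB]
    linear_combination hdetPQ
  set a := A₁ 0 0 with ha'
  set b := B₁ 0 0 with hb'
  have hadet : a * A₁ 1 1 = 1 := by
    rw [Matrix.det_fin_two, hA10] at hdetA₁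
    linear_combination hdetA₁
  have hbdet : b * B₁ 1 1 = 1 := by
    rw [Matrix.det_fin_two, hB10] at hdetB₁
    linear_combination hdetB₁
  have ha : a ≠ 0 := left_ne_zero_of_mul_eq_one hadet
  have hb : b ≠ 0 := left_ne_zero_of_mul_eq_one hbdet
  have hainv : A₁ 1 1 = a⁻¹ := (inv_eq_of_mul_eq_one_right hadet).symm
  have hbinv : B₁ 1 1 = b⁻¹ := (inv_eq_of_mul_eq_one_right hbdet).symm
  have htrA : A.trace = A₁.trace := by
    rw [hA₁, Matrix.trace_mul_cycle, hPQ, one_mul]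
  have htrB : B.trace = B₁.trace := by
    rw [hB₁, Matrix.trace_mul_cycle, hPQ, one_mul]
  have hAB : A₁ * B₁ = Q * (A * B) * P := by
    rw [hA₁, hB₁]
    calc Q * A * P * (Q * B * P) = Q * A * (P * Q) * B * P := by noncomm_ring
      _ = Q * (A * B) * P := by rw [hPQ, mul_one]; noncomm_ring
  have htrAB : (A * B).trace = (A₁ * B₁).trace := by
    rw [hAB, Matrix.trace_mul_cycle, hPQ, one_mul]
  refine ⟨a, b, ha, hb, ?_, ?_, ?_, ?_⟩
  · rw [htrA, Matrix.trace_fin_two, hainv]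
  · rw [htrB, Matrix.trace_fin_two, hbinv]
  · rw [htrAB, Matrix.trace_fin_two, Matrix.mul_apply, Matrix.mul_apply, Fin.sum_univ_two,
      Fin.sum_univ_two, hA10, hB10, hainv, hbinv, mul_inv]
    ring
  · have h1 := (tri_pow A₁ hA10 m).2.1
    have h2 := (tri_pow B₁ hB10 n).2.1
    rw [hApow] at h1
    rw [hBpow] at h2
    rw [← h1, ← h2]

lemma bezout_t (m n : ℕ) (hcop : Nat.Coprime m n) (a b : ℂ) (ha : a ≠ 0) (hb : b ≠ 0)
    (hab : a ^ m = b ^ n) : ∃ t : ℂ, t ≠ 0 ∧ t ^ n = a ∧ t ^ m = b := by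
  obtain ⟨u, v, huv⟩ := Nat.isCoprime_iff_coprime.mpr hcop
  set A : ℂˣ := Units.mk0 a ha with hA
  set B : ℂˣ := Units.mk0 b hb with hB
  have hab' : A ^ (m : ℤ) = B ^ (n : ℤ) := by
    ext
    push_cast
    simpa [hA, hB] using hab
  have key1 : (A ^ v * B ^ u) ^ (n : ℤ) = A := by
    rw [mul_zpow, ← _root_.zpow_mul, ← _root_.zpow_mul]
    have e1 : B ^ (u * (n : ℤ)) = A ^ ((m : ℤ) * u) := by
      rw [mul_comm u (n : ℤ), _root_.zpow_mul, ← hab', ← _root_.zpow_mul, mul_comm]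
    rw [e1, ← _root_.zpow_add]
    have : v * (n : ℤ) + (m : ℤ) * u = 1 := by linarith [huv]
    rw [this, zpow_one]
  have key2 : (A ^ v * B ^ u) ^ (m : ℤ) = B := by
    rw [mul_zpow, ← _root_.zpow_mul, ← _root_.zpow_mul]
    have e1 : A ^ (v * (m : ℤ)) = B ^ ((n : ℤ) * v) := by
      rw [mul_comm v (m : ℤ), _root_.zpow_mul, hab', ← _root_.zpow_mul, mul_comm]
    rw [e1, ← _root_.zpow_add]
    have : (n : ℤ) * v + u * (m : ℤ) = 1 := by linarith [huv]
    rw [this, zpow_one]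
  refine ⟨((A ^ v * B ^ u : ℂˣ) : ℂ), Units.ne_zero _, ?_, ?_⟩
  · have := congrArg (fun x : ℂˣ => (x : ℂ)) key1
    simpa [← zpow_natCast, hA] using this
  · have := congrArg (fun x : ℂˣ => (x : ℂ)) key2
    simpa [← zpow_natCast, hB] using this

lemma smul_one_eq (c : ℂ) : (c • (1 : M2)) = !![c, 0; 0, c] := by
  ext i j
  fin_cases i <;> fin_cases j <;> simp [Matrix.one_apply]

lemma diag_pow (x y : ℂ) (k : ℕ) : (!![x, 0; 0, y] : M2) ^ k = !![x ^ k, 0; 0, y ^ k] := by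
  induction k with
  | zero =>
    rw [pow_zero]
    ext i j
    fin_cases i <;> fin_cases j <;> simp [Matrix.one_apply]
  | succ k ih =>
    rw [pow_succ, ih, Matrix.mul_fin_two]
    norm_num [pow_succ]

end Stmt12Aux

open Stmt12Aux in
theorem stmt12 (m n : ℕ) (hm : 0 < m) (hn : 0 < n) (hcop : Nat.Coprime m n) :
    {x : ℂ × ℂ × ℂ | ∃ A B : Matrix (Fin 2) (Fin 2) ℂ,
        A.det = 1 ∧ B.det = 1 ∧ A ^ m = B ^ n ∧
        x = (A.trace, B.trace, (A * B).trace)} =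
      {x : ℂ × ℂ × ℂ | ∃ t : ℂ, t ≠ 0 ∧
          x = (t ^ n + (t ^ n)⁻¹, t ^ m + (t ^ m)⁻¹,
                t ^ (n + m) + (t ^ (n + m))⁻¹)} ∪
      {x : ℂ × ℂ × ℂ | ∃ l mu z : ℂ,
          l ^ (2 * m) = 1 ∧ l ^ 2 ≠ 1 ∧ mu ^ 2 ≠ 1 ∧ l ^ m = mu ^ n ∧
          x = (l + l⁻¹, mu + mu⁻¹, z)} := by
  apply Set.eq_of_subset_of_subset
  · rintro x ⟨A, B, hA, hB, hpow, hx⟩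
    by_cases hsc : ∃ c : ℂ, A ^ m = c • 1
    · obtain ⟨c, hc⟩ := hsc
      have hcc : c * c = 1 := by
        have h1 : (A ^ m).det = 1 := by rw [Matrix.det_pow, hA, one_pow]
        rw [hc, Matrix.det_smul, Matrix.det_one, mul_one, Fintype.card_fin] at h1
        rw [← h1]; ring
      have hBc : B ^ n = c • 1 := by rw [← hpow, hc]
      obtain ⟨l, hl0, hsl⟩ := exists_lam A.trace
      obtain ⟨mu, hmu0, hsmu⟩ := exists_lam B.trace
      by_cases hl2 : l * l = 1
      · obtain ⟨hAeq, hlm⟩ := unipotent_case A hA l hl2 hsl m hm c hc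
        have hmun : mu ^ n = c := by
          by_cases hmu2 : mu * mu = 1
          · exact (unipotent_case B hB mu hmu2 hsmu n hn c hBc).2
          · exact eig_pow_scalar B hB mu hmu0 hsmu hmu2 n c hBc
        obtain ⟨t, ht, htn, htm⟩ := bezout_t m n hcop l mu hl0 hmu0 (by rw [hlm, hmun])
        left
        refine ⟨t, ht, ?_⟩
        rw [hx]
        have hli : l⁻¹ = l := linv l hl2
        simp only [Prod.mk.injEq]
        refine ⟨by rw [hsl, htn], by rw [hsmu, htm], ?_⟩
        rw [hAeq, smul_mul_assoc, one_mul, Matrix.trace_smul, pow_add, htn, htm,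
          hsmu, mul_inv, hli, smul_eq_mul]
        ring
      · by_cases hmu2 : mu * mu = 1
        · obtain ⟨hBeq, hmun⟩ := unipotent_case B hB mu hmu2 hsmu n hn c hBc
          have hlm : l ^ m = c := eig_pow_scalar A hA l hl0 hsl hl2 m c hc
          obtain ⟨t, ht, htn, htm⟩ := bezout_t m n hcop l mu hl0 hmu0 (by rw [hlm, hmun])
          left
          refine ⟨t, ht, ?_⟩
          rw [hx]
          have hmui : mu⁻¹ = mu := linv mu hmu2
          simp only [Prod.mk.injEq]
          refine ⟨by rw [hsl, htn], by rw [hsmu, htm], ?_⟩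
          rw [hBeq, mul_smul_comm, mul_one, Matrix.trace_smul, pow_add, htn, htm,
            hsl, mul_inv, hmui, smul_eq_mul]
          ring
        · have hlm : l ^ m = c := eig_pow_scalar A hA l hl0 hsl hl2 m c hc
          have hmun : mu ^ n = c := eig_pow_scalar B hB mu hmu0 hsmu hmu2 n c hBc
          right
          refine ⟨l, mu, (A * B).trace, ?_, ?_, ?_, ?_, ?_⟩
          · have h2m : l ^ (2 * m) = (l ^ m) * (l ^ m) := by
              rw [two_mul, pow_add]
            rw [h2m, hlm, hcc]
          · rw [pow_two]; exact hl2
          · rw [pow_two]; exact hmu2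
          · rw [hlm, hmun]
          · rw [hx]
            simp only [Prod.mk.injEq]
            exact ⟨hsl, hsmu, trivial⟩
    · push_neg at hsc
      obtain ⟨a, b, ha, hb, htA, htB, htAB, habmn⟩ := nonscalar_case A B hA hB m n hpow hsc
      obtain ⟨t, ht, htn, htm⟩ := bezout_t m n hcop a b ha hb habmn
      left
      refine ⟨t, ht, ?_⟩
      rw [hx]
      simp only [Prod.mk.injEq]
      exact ⟨by rw [htA, htn], by rw [htB, htm],
        by rw [htAB, pow_add, htn, htm]⟩
  · rintro x (⟨t, ht, hx⟩ | ⟨l, mu, z, h2m, hl2, hmu2, hlm, hx⟩)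
    · have htn : (t : ℂ) ^ n ≠ 0 := pow_ne_zero _ ht
      have htm : (t : ℂ) ^ m ≠ 0 := pow_ne_zero _ ht
      refine ⟨!![t ^ n, 0; 0, (t ^ n)⁻¹], !![t ^ m, 0; 0, (t ^ m)⁻¹], ?_, ?_, ?_, ?_⟩
      · rw [Matrix.det_fin_two_of, mul_inv_cancel₀ htn]; ring
      · rw [Matrix.det_fin_two_of, mul_inv_cancel₀ htm]; ring
      · rw [diag_pow, diag_pow]
        have e1 : (t ^ n) ^ m = (t ^ m) ^ n := by
          rw [← pow_mul, ← pow_mul, mul_comm]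
        rw [inv_pow, inv_pow, e1]
      · rw [hx, Matrix.mul_fin_two]
        simp only [Prod.mk.injEq]
        refine ⟨by rw [Matrix.trace_fin_two_of], by rw [Matrix.trace_fin_two_of], ?_⟩
        rw [Matrix.trace_fin_two_of]
        rw [pow_add, mul_inv]
        ring
    · have hl0 : l ≠ 0 := by
        intro h0
        rw [h0, zero_pow (by omega : 2 * m ≠ 0)] at h2m
        exact zero_ne_one h2m
      have hl2' : l * l ≠ 1 := by rw [← pow_two]; exact hl2
      have hmu2' : mu * mu ≠ 1 := by rw [← pow_two]; exact hmu2
      have hlmm : l ^ m * l ^ m = 1 := by rw [← pow_add, ← two_mul]; exact h2m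
      have hmn0 : mu ^ n * mu ^ n = 1 := by rw [← hlm]; exact hlmm
      have hmu0 : mu ≠ 0 := by
        intro h0
        apply left_ne_zero_of_mul_eq_one hmn0
        rw [h0, zero_pow hn.ne']
      have hsub : l - l⁻¹ ≠ 0 := lne l hl0 hl2'
      set s := mu + mu⁻¹ with hs
      set a := (z - l⁻¹ * s) / (l - l⁻¹) with ha
      set d := s - a with hd
      have hdB : (!![a, a * d - 1; 1, d] : M2).det = 1 := by
        rw [Matrix.det_fin_two_of]; ring
      have htB : (!![a, a * d - 1; 1, d] : M2).trace = mu + mu⁻¹ := by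
        rw [Matrix.trace_fin_two_of, hd]; ring
      have hBn : (!![a, a * d - 1; 1, d] : M2) ^ n = (mu ^ n) • 1 :=
        pow_eq_scalar _ hdB mu hmu0 htB hmu2' n hmn0
      have hAm : (!![l, 0; 0, l⁻¹] : M2) ^ m = (l ^ m) • 1 := by
        rw [diag_pow, inv_pow, linv _ hlmm, smul_one_eq]
      refine ⟨!![l, 0; 0, l⁻¹], !![a, a * d - 1; 1, d], ?_, hdB, ?_, ?_⟩
      · rw [Matrix.det_fin_two_of, mul_inv_cancel₀ hl0]; ring
      · rw [hAm, hBn, hlm]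
      · rw [hx, Matrix.mul_fin_two]
        simp only [Prod.mk.injEq]
        refine ⟨by rw [Matrix.trace_fin_two_of], by rw [htB], ?_⟩
        rw [Matrix.trace_fin_two_of]
        have hcancel : a * (l - l⁻¹) = z - l⁻¹ * s := div_mul_cancel₀ _ hsub
        rw [hd]
        linear_combination -hcancel
end
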